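/- Let B be a Banach A-bimodule and let n ≥ 3 be an odd integer. If B^(n)·A^(n-1) ⊆ B^(n-2), i.e., for all b^(n) ∈ B^(n) and a^(n-1) ∈ A^(n-1) the element b^(n)a^(n-1) ∈ B^(n) lies in B^(n-2), and B^(n-1) has a left unit A^(n-1)-module (an element e^(n-1) ∈ A^(n-1) with e^(n-1)b^(n-1) = b^(n-1) for all b^(n-1) ∈ B^(n-1)), then B is a reflexive Banach space. -/

import Mathlib

open NormedSpace Filter Topology

noncomputable section

universe u

/-- The Arens adjoint of a bounded bilinear map `m : X × Y → Z`:
`⟨adjB m z' x, y⟩ = ⟨z', m x y⟩`.  Its triple iterate `adjB (adjB (adjB m))` is the Arens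
(triple adjoint) extension `m*** : X** × Y** → Z**`. -/
def adjB {X Y Z : Type*} [NormedAddCommGroup X] [NormedSpace ℂ X]
    [NormedAddCommGroup Y] [NormedSpace ℂ Y] [NormedAddCommGroup Z] [NormedSpace ℂ Z]
    (m : X →L[ℂ] Y →L[ℂ] Z) : StrongDual ℂ Z →L[ℂ] X →L[ℂ] StrongDual ℂ Y :=
  ((ContinuousLinearMap.compL ℂ X (Y →L[ℂ] Z) (Y →L[ℂ] ℂ)).flip m).comp
    (ContinuousLinearMap.compL ℂ Y Z ℂ)

/-- A pair consisting of a Banach algebra (carrier `X`, multiplication `mul`) and a Banach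
`X`-bimodule (carrier `Y`, left action `pl`, right action `pr`), recorded through its bounded
(bi)linear structure maps. -/
structure APair : Type (u + 1) where
  X : Type u
  Y : Type u
  [nX : NormedAddCommGroup X]
  [mX : NormedSpace ℂ X]
  [nY : NormedAddCommGroup Y]
  [mY : NormedSpace ℂ Y]
  mul : X →L[ℂ] X →L[ℂ] X
  pl : X →L[ℂ] Y →L[ℂ] Y
  pr : Y →L[ℂ] X →L[ℂ] Y

attribute [instance] APair.nX APair.mX APair.nY APair.mY

/-- Passage to biduals: `X ↦ X**`, `Y ↦ Y**`, with the first Arens product on `X**` and the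
Arens triple-adjoint extensions of the module actions. -/
def APair.bidual (P : APair) : APair where
  X := StrongDual ℂ (StrongDual ℂ P.X)
  Y := StrongDual ℂ (StrongDual ℂ P.Y)
  mul := adjB (adjB (adjB P.mul))
  pl := adjB (adjB (adjB P.pl))
  pr := adjB (adjB (adjB P.pr))

/-- `P.iter k` is the `2k`-th dual level of the pair `P`: the Banach algebra `A^(2k)` acting on
the Banach bimodule `B^(2k)`. -/
def APair.iter (P : APair) : ℕ → APair
  | 0 => P
  | k + 1 => (P.iter k).bidual

variable (A B : Type u) [NonUnitalNormedRing A] [NormedSpace ℂ A]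
  [SMulCommClass ℂ A A] [IsScalarTower ℂ A A] [CompleteSpace A]
  [NormedAddCommGroup B] [NormedSpace ℂ B] [CompleteSpace B]

variable (πl : A →L[ℂ] B →L[ℂ] B) (πr : B →L[ℂ] A →L[ℂ] B)

/-- The base pair: the Banach algebra `A` together with the Banach `A`-bimodule `B`. -/
def basePair : APair where
  X := A
  Y := B
  mul := ContinuousLinearMap.mul ℂ A
  pl := πl
  pr := πr


section Aux

open NormedSpace

lemma sep_aux {W : Type*} [NormedAddCommGroup W] [NormedSpace ℂ W] (S : Submodule ℂ W)
    (hSc : IsClosed (S : Set W)) (x2 : W) (hxS : x2 ∉ S) :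
    ∃ g : StrongDual ℂ W, (∀ s ∈ S, g s = 0) ∧ g x2 ≠ 0 := by
  have hq0 : (Submodule.Quotient.mk x2 : W ⧸ S) ≠ 0 := by
    intro h0
    exact hxS ((Submodule.Quotient.mk_eq_zero S).mp h0)
  haveI : IsClosed (S : Set W) := hSc
  obtain ⟨g, hg1, hg2⟩ := exists_dual_vector ℂ (Submodule.Quotient.mk x2 : W ⧸ S) (norm_ne_zero_iff.mpr hq0)
  set mkCLM : W →L[ℂ] (W ⧸ S) :=
    LinearMap.mkContinuous S.mkQ 1
      (fun m => by simpa using Submodule.Quotient.norm_mk_le S m) with hmk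
  refine ⟨g.comp mkCLM, fun s hs => ?_, ?_⟩
  · show g (Submodule.Quotient.mk s) = 0
    rw [(Submodule.Quotient.mk_eq_zero S).mpr hs, map_zero]
  · show g (Submodule.Quotient.mk x2) ≠ 0
    rw [hg2]
    exact Complex.ofReal_ne_zero.mpr (norm_ne_zero_iff.mpr hq0)

/-- Hahn–Banach step: if the canonical embedding of the dual `X*` into its bidual is
surjective, and `X` is complete, then the canonical embedding of `X` is surjective. -/
lemma surj_of_dual_surj {X : Type*} [NormedAddCommGroup X] [NormedSpace ℂ X] [CompleteSpace X]
    (h : Function.Surjective (inclusionInDoubleDual ℂ (StrongDual ℂ X))) :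
    Function.Surjective (inclusionInDoubleDual ℂ X) := by
  set ι := inclusionInDoubleDual ℂ X with hι
  intro x2
  by_contra hx
  have hxS : x2 ∉ LinearMap.range (ι : X →ₗ[ℂ] StrongDual ℂ (StrongDual ℂ X)) := fun hm => hx (LinearMap.mem_range.mp hm)
  set S : Submodule ℂ (StrongDual ℂ (StrongDual ℂ X)) := LinearMap.range (ι : X →ₗ[ℂ] StrongDual ℂ (StrongDual ℂ X)) with hS
  haveI hSc : IsClosed (S : Set (StrongDual ℂ (StrongDual ℂ X))) := by
    have hrange : (S : Set (StrongDual ℂ (StrongDual ℂ X))) = Set.range ι := by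
      ext y
      simp [hS, LinearMap.mem_range]
    rw [hrange]
    have hiso : Isometry ι := (inclusionInDoubleDualLi ℂ (E := X)).isometry
    exact hiso.isClosedEmbedding.isClosed_range
  obtain ⟨F, hFS, hFx⟩ := sep_aux S hSc x2 hxS
  obtain ⟨f, hf⟩ := h F
  have hf0 : f = 0 := by
    ext x
    have h1 : F (ι x) = 0 := hFS _ (LinearMap.mem_range_self _ x)
    have h2 : F (ι x) = f x := by
      rw [← hf]
      simp [hι, NormedSpace.dual_def]
    simp only [ContinuousLinearMap.zero_apply]
    rw [← h2, h1]
  have hF0 : F = 0 := by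
    rw [← hf, hf0, map_zero]
  exact hFx (by rw [hF0]; rfl)

/-- Every even-dual level of the bimodule carrier is complete. -/
lemma completeY (P : APair) [CompleteSpace P.Y] : ∀ k, CompleteSpace ((P.iter k).Y)
  | 0 => ‹CompleteSpace P.Y›
  | k + 1 => by
    haveI := completeY P k
    show CompleteSpace (StrongDual ℂ (StrongDual ℂ ((P.iter k).Y)))
    infer_instance

/-- Descend surjectivity of the canonical embedding from level `2k` to level `0`. -/
lemma down (P : APair) [CompleteSpace P.Y] :
    ∀ k, Function.Surjective (inclusionInDoubleDual ℂ ((P.iter k).Y)) →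
      Function.Surjective (inclusionInDoubleDual ℂ P.Y)
  | 0, h => h
  | k + 1, h => by
    haveI := completeY P k
    have h' : Function.Surjective
        (inclusionInDoubleDual ℂ (StrongDual ℂ (StrongDual ℂ ((P.iter k).Y)))) := h
    have h1 : Function.Surjective (inclusionInDoubleDual ℂ (StrongDual ℂ ((P.iter k).Y))) :=
      surj_of_dual_surj (X := StrongDual ℂ ((P.iter k).Y)) h'
    have h2 : Function.Surjective (inclusionInDoubleDual ℂ ((P.iter k).Y)) :=
      surj_of_dual_surj h1
    exact down P k h2

end Aux

/-- with `n = 2*j + 3 ≥ 3` odd: if `B^(n)·A^(n-1) ⊆ B^(n-2)`, i.e. each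
`b^(n)a^(n-1) ∈ B^(n)` (defined by `⟨b^(n)a^(n-1), b^(n-1)⟩ = ⟨b^(n), a^(n-1)b^(n-1)⟩`) lies in
the canonical image of `B^(n-2)`, and `B^(n-1)` has a left unit `A^(n-1)`-module
(`e^(n-1)b^(n-1) = b^(n-1)` for all `b^(n-1)`), then `B` is reflexive.  Here `Q` is level
`n-3`, so `B^(n-2) = (Q.Y)*`, `A^(n-1) = (Q.X)**`, `B^(n-1) = (Q.Y)**`, `B^(n) = (B^(n-1))*`,
and the left action of `A^(n-1)` on `B^(n-1)` is the Arens extension `adjB³ Q.pl`. -/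

theorem stmt11
    (hℓ : ∀ (a b : A) (x : B), πl (a * b) x = πl a (πl b x))
    (hr : ∀ (x : B) (a b : A), πr (πr x a) b = πr x (a * b))
    (hm : ∀ (a : A) (x : B) (b : A), πr (πl a x) b = πl a (πr x b))
    (j : ℕ)
    (h : ∀ (b3 : StrongDual ℂ (StrongDual ℂ (StrongDual ℂ ((basePair A B πl πr).iter j).Y)))
        (a2 : StrongDual ℂ (StrongDual ℂ ((basePair A B πl πr).iter j).X)),
      b3.comp (adjB (adjB (adjB ((basePair A B πl πr).iter j).pl)) a2) ∈
        Set.range (inclusionInDoubleDual ℂ (StrongDual ℂ ((basePair A B πl πr).iter j).Y)))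
    (hunit : ∃ e : StrongDual ℂ (StrongDual ℂ ((basePair A B πl πr).iter j).X),
      ∀ b2 : StrongDual ℂ (StrongDual ℂ ((basePair A B πl πr).iter j).Y),
        adjB (adjB (adjB ((basePair A B πl πr).iter j).pl)) e b2 = b2) :
    Function.Surjective (inclusionInDoubleDual ℂ B) := by
  obtain ⟨e, he⟩ := hunit
  have key : Function.Surjective
      (inclusionInDoubleDual ℂ (StrongDual ℂ ((basePair A B πl πr).iter j).Y)) := by
    intro b3
    have hh := h b3 e
    have heq : b3.comp (adjB (adjB (adjB ((basePair A B πl πr).iter j).pl)) e) = b3 := by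
      ext b2
      simp only [ContinuousLinearMap.comp_apply, he b2]
    rwa [heq] at hh
  haveI : CompleteSpace (basePair A B πl πr).Y := (inferInstance : CompleteSpace B)
  haveI : CompleteSpace ((basePair A B πl πr).iter j).Y := completeY _ j
  have hQ := surj_of_dual_surj key
  exact down (basePair A B πl πr) j hQ


end
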